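/- arXiv:2403.04616 — 12 statements merged into one kernel-verified Lean document; each statement's English description precedes it below -/
import Mathlib

section
/- Let k ≥ 1 and γ = 0. For every k-portfolio 1 ≥ x_1 > x_2 > ... > x_k ≥ 0 (with x_0 = 1), the unbiased utility satisfies U_0(x_1,...,x_k) = Σ_{i=1}^k x_i(x_{i-1} - x_i) ≤ k/(2(k+1)), and equality holds for the equally spaced portfolio x_i = (k+1-i)/(k+1) for i = 1,...,k. In particular the optimal unbiased k-portfolio is the equally spaced one, with optimal value k/(2(k+1)). -/
open Finset

lemma tele_aux (n : ℕ) (f : ℕ → ℝ) :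
    ∑ i ∈ Finset.Icc 1 n, (f (i - 1) - f i) = f 0 - f n := by
  induction n with
  | zero => simp
  | succ n ih =>
    rw [Finset.sum_Icc_succ_top (by omega), ih]
    simp only [Nat.add_sub_cancel]
    ring

lemma gauss_aux (k : ℕ) : ∑ i ∈ Finset.Icc 1 k, (i : ℝ) = k * (k + 1) / 2 := by
  induction k with
  | zero => simp
  | succ n ih =>
    rw [Finset.sum_Icc_succ_top (by omega), ih]
    push_cast
    ring

/-- For γ = 0, every k-portfolio `1 ≥ x_1 > ⋯ > x_k ≥ 0` (with `x_0 = 1`)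
has unbiased utility `∑_{i=1}^k x_i (x_{i-1} - x_i) ≤ k/(2(k+1))`, and the equally
spaced portfolio `x_i = (k+1-i)/(k+1)` achieves this value exactly. -/
theorem stmt_3 (k : ℕ) (hk : 1 ≤ k) :
    (∀ x : ℕ → ℝ, x 0 = 1 → x 1 ≤ 1 →
      (∀ i, 1 ≤ i → i < k → x (i + 1) < x i) → 0 ≤ x k →
      ∑ i ∈ Finset.Icc 1 k, x i * (x (i - 1) - x i) ≤ (k : ℝ) / (2 * ((k : ℝ) + 1))) ∧
    (∑ i ∈ Finset.Icc 1 k,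
        (((k : ℝ) + 1 - (i : ℝ)) / ((k : ℝ) + 1)) *
          ((((k : ℝ) + 1 - ((i - 1 : ℕ) : ℝ)) / ((k : ℝ) + 1)) -
            ((k : ℝ) + 1 - (i : ℝ)) / ((k : ℝ) + 1))
      = (k : ℝ) / (2 * ((k : ℝ) + 1))) := by
  have hk1 : (0 : ℝ) < (k : ℝ) + 1 := by positivity
  constructor
  · intro x h0 h1 hdec hkpos
    -- g i : the i-th gap, for i ∈ Icc 1 (k+1)
    set g : ℕ → ℝ := fun i => if i ≤ k then x (i - 1) - x i else x k with hg
    have hsum_g : ∑ i ∈ Finset.Icc 1 (k + 1), g i = 1 := by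
      rw [Finset.sum_Icc_succ_top (by omega)]
      have : ∀ i ∈ Finset.Icc 1 k, g i = x (i - 1) - x i := by
        intro i hi
        simp only [Finset.mem_Icc] at hi
        simp [hg, hi.2]
      rw [Finset.sum_congr rfl this, tele_aux k x, h0]
      simp [hg]
    have hsum_gsq : ∑ i ∈ Finset.Icc 1 (k + 1), g i ^ 2
        = (∑ i ∈ Finset.Icc 1 k, (x (i - 1) - x i) ^ 2) + x k ^ 2 := by
      rw [Finset.sum_Icc_succ_top (by omega)]
      have : ∀ i ∈ Finset.Icc 1 k, g i ^ 2 = (x (i - 1) - x i) ^ 2 := by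
        intro i hi
        simp only [Finset.mem_Icc] at hi
        simp [hg, hi.2]
      rw [Finset.sum_congr rfl this]
      simp [hg]
    -- Cauchy-Schwarz
    have hcs := sq_sum_le_card_mul_sum_sq (s := Finset.Icc 1 (k + 1)) (f := g)
    rw [hsum_g, Nat.card_Icc] at hcs
    simp only [Nat.add_sub_cancel, one_pow] at hcs
    -- rewrite the objective
    have hobj : ∑ i ∈ Finset.Icc 1 k, x i * (x (i - 1) - x i)
        = (1 - x k ^ 2) / 2 - (∑ i ∈ Finset.Icc 1 k, (x (i - 1) - x i) ^ 2) / 2 := by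
      have : ∀ i ∈ Finset.Icc 1 k, x i * (x (i - 1) - x i)
          = (x (i - 1) ^ 2 - x i ^ 2) / 2 - (x (i - 1) - x i) ^ 2 / 2 := by
        intro i _; ring
      rw [Finset.sum_congr rfl this, Finset.sum_sub_distrib, ← Finset.sum_div,
        ← Finset.sum_div]
      have htel : ∑ i ∈ Finset.Icc 1 k, (x (i - 1) ^ 2 - x i ^ 2)
          = 1 - x k ^ 2 := by
        rw [tele_aux k (fun i => x i ^ 2), h0]; norm_num
      rw [htel]
    rw [hobj]
    have hlb : (1 : ℝ) / ((k : ℝ) + 1)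
        ≤ (∑ i ∈ Finset.Icc 1 k, (x (i - 1) - x i) ^ 2) + x k ^ 2 := by
      rw [← hsum_gsq]
      rw [div_le_iff₀ hk1]
      calc (1 : ℝ) ≤ ((k : ℝ) + 1) * ∑ i ∈ Finset.Icc 1 (k + 1), g i ^ 2 := by
            push_cast at hcs ⊢; linarith
        _ = (∑ i ∈ Finset.Icc 1 (k + 1), g i ^ 2) * ((k : ℝ) + 1) := by ring
    have hxk : 0 ≤ x k ^ 2 := sq_nonneg _
    have : (k : ℝ) / (2 * ((k : ℝ) + 1)) = (1 - 1 / ((k : ℝ) + 1)) / 2 := by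
      have hne : ((k : ℝ) + 1) ≠ 0 := hk1.ne'
      rw [one_sub_div hne]
      rw [show (k : ℝ) + 1 - 1 = (k : ℝ) by ring, div_div, mul_comm]
    rw [this]
    linarith
  · have hterm : ∀ i ∈ Finset.Icc 1 k,
        (((k : ℝ) + 1 - (i : ℝ)) / ((k : ℝ) + 1)) *
          ((((k : ℝ) + 1 - ((i - 1 : ℕ) : ℝ)) / ((k : ℝ) + 1)) -
            ((k : ℝ) + 1 - (i : ℝ)) / ((k : ℝ) + 1))
        = (((k : ℝ) + 1) - (i : ℝ)) / (((k : ℝ) + 1) ^ 2) := by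
      intro i hi
      simp only [Finset.mem_Icc] at hi
      have : ((i - 1 : ℕ) : ℝ) = (i : ℝ) - 1 := by
        have := hi.1; push_cast [Nat.cast_sub this]; ring
      rw [this, div_sub_div_same, div_mul_div_comm]
      congr 1
      · ring
      · ring
    rw [Finset.sum_congr rfl hterm, ← Finset.sum_div, Finset.sum_sub_distrib,
      gauss_aux k]
    rw [Finset.sum_const, Nat.card_Icc]
    simp only [Nat.add_sub_cancel, nsmul_eq_mul]
    field_simp
    ring
end

section
/- Fix γ > 0 and k ≥ 1, and let 1 ≥ x_1 > x_2 > ... > x_k > 0 be any k-portfolio. Then there exists y with 0 < y < x_k such that appending y as a (k+1)-st school strictly increases the perceived expected utility: U_γ(x_1,...,x_k,y) - U_γ(x_1,...,x_k) = -γ y²(1-y) + y(x_k - y) > 0. Consequently, the optimal perceived expected utility of a γ-biased student is strictly increasing in the portfolio size k. -/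
open Finset

/-- Perceived expected utility of the k-portfolio `x 1 > x 2 > ⋯ > x k`
(with the convention `x 0 = 1`):
`U_γ = ∑_{i=1}^k [ -γ(1-x_i)x_i² + x_i(x_{i-1} - x_i) ]`. -/
noncomputable def U (γ : ℝ) (k : ℕ) (x : ℕ → ℝ) : ℝ :=
  ∑ i ∈ Finset.Icc 1 k, (-γ * (1 - x i) * (x i) ^ 2 + x i * (x (i - 1) - x i))

/-- For any γ > 0 and any k-portfolio with `x k > 0`, there is a school
`y ∈ (0, x k)` whose addition as a (k+1)-st school strictly increases the perceived
expected utility, the marginal change being `-γ y²(1-y) + y(x_k - y) > 0`. Hence the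
optimal perceived expected utility is strictly increasing in the portfolio size. -/
theorem stmt_5 (γ : ℝ) (hγ : 0 < γ) (k : ℕ) (hk : 1 ≤ k) (x : ℕ → ℝ)
    (hx0 : x 0 = 1) (hx1 : x 1 ≤ 1)
    (hdec : ∀ i, 1 ≤ i → i < k → x (i + 1) < x i) (hpos : 0 < x k) :
    ∃ y : ℝ, 0 < y ∧ y < x k ∧
      U γ (k + 1) (Function.update x (k + 1) y) - U γ k x
        = -γ * y ^ 2 * (1 - y) + y * (x k - y) ∧
      0 < -γ * y ^ 2 * (1 - y) + y * (x k - y) ∧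
      U γ k x < U γ (k + 1) (Function.update x (k + 1) y) := by
  have h1γ : (0:ℝ) < 2 * (1 + γ) := by linarith
  set y := x k / (2 * (1 + γ)) with hy
  have hy0 : 0 < y := div_pos hpos h1γ
  have hyv : y * (2 * (1 + γ)) = x k := by
    rw [hy, div_mul_cancel₀ _ h1γ.ne']
  have hylt : y < x k := by nlinarith
  have hxk1 : x k ≤ 1 := by
    have key : ∀ i, 1 ≤ i → i ≤ k → x i ≤ 1 := by
      intro i h1 h2
      induction i with
      | zero => omega
      | succ n ih =>
        rcases Nat.eq_zero_or_pos n with h | h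
        · subst h; exact hx1
        · have := hdec n h (by omega)
          have := ih h (by omega)
          linarith
    exact key k hk le_rfl
  have heq : U γ (k + 1) (Function.update x (k + 1) y) - U γ k x
      = -γ * y ^ 2 * (1 - y) + y * (x k - y) := by
    unfold U
    rw [Finset.sum_Icc_succ_top (by omega : 1 ≤ k + 1)]
    have hsum : ∑ i ∈ Finset.Icc 1 k,
        (-γ * (1 - Function.update x (k + 1) y i) * (Function.update x (k + 1) y i) ^ 2
          + Function.update x (k + 1) y i * (Function.update x (k + 1) y (i - 1)
            - Function.update x (k + 1) y i))
        = ∑ i ∈ Finset.Icc 1 k, (-γ * (1 - x i) * (x i) ^ 2 + x i * (x (i - 1) - x i)) := by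
      apply Finset.sum_congr rfl
      intro i hi
      simp only [Finset.mem_Icc] at hi
      rw [Function.update_of_ne (by omega), Function.update_of_ne (by omega)]
    rw [hsum]
    have h1 : Function.update x (k + 1) y (k + 1) = y := Function.update_self _ _ _
    have h2 : Function.update x (k + 1) y (k + 1 - 1) = x k := by
      rw [Nat.add_sub_cancel, Function.update_of_ne (by omega)]
    rw [h1, h2]
    ring
  have hgain : 0 < -γ * y ^ 2 * (1 - y) + y * (x k - y) := by
    have h1y : 0 ≤ 1 - y := by linarith
    nlinarith [mul_pos hy0 hy0, mul_pos hγ (mul_pos hy0 hy0), mul_nonneg (mul_nonneg hγ.le hy0.le) (mul_nonneg hy0.le h1y)]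
  exact ⟨y, hy0, hylt, heq, hgain, by linarith⟩
end

section
/- Let γ > 0, let x_1 ∈ [0,1], and let x_2 = 2x_1 - 1 + γ(2x_1 - 3x_1²), and suppose x_2 ≤ x_1. Then x_2 ≤ h(γ), where h(γ) = 1 - γ if 0 < γ < 1/2; h(γ) = (1 - γ + γ²)/(3γ) if 1/2 ≤ γ < 2; and h(γ) = (1 + 2γ + √((1-2γ)² - 4γ))/(6γ) if γ ≥ 2. In particular, in any optimal portfolio of a γ-biased student the second-highest school x_2 is at most h(γ) < 1, independently of the portfolio size k. -/
/-- The bound `h(γ)` on the second-highest school in an optimal portfolio. -/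
noncomputable def hBound (γ : ℝ) : ℝ :=
  if γ < 1 / 2 then 1 - γ
  else if γ < 2 then (1 - γ + γ ^ 2) / (3 * γ)
  else (1 + 2 * γ + Real.sqrt ((1 - 2 * γ) ^ 2 - 4 * γ)) / (6 * γ)

/-- For γ > 0, if `x1 ∈ [0,1]` and `x2 = 2x1 - 1 + γ(2x1 - 3x1²)`
(the FOC at i = 1, with `x0 = 1`) with `x2 ≤ x1`, then `x2 ≤ h(γ)`, where `h(γ)`
is the piecewise bound above; moreover `h(γ) < 1`. -/
theorem stmt_6 (γ : ℝ) (hγ : 0 < γ) (x1 x2 : ℝ) (hx1 : x1 ∈ Set.Icc (0:ℝ) 1)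
    (hx2 : x2 = 2 * x1 - 1 + γ * (2 * x1 - 3 * x1 ^ 2)) (hle : x2 ≤ x1) :
    x2 ≤ hBound γ ∧ hBound γ < 1 := by
  obtain ⟨h0, h1⟩ := hx1
  unfold hBound
  split_ifs with hA hB
  · constructor
    · nlinarith [mul_nonneg (sub_nonneg.mpr h1) hγ.le, mul_nonneg h0 hγ.le,
        mul_nonneg (mul_nonneg h0 h0) hγ.le, sq_nonneg (1 - x1)]
    · linarith
  · push_neg at hA
    constructor
    · rw [le_div_iff₀ (by positivity)]
      nlinarith [sq_nonneg (3 * γ * x1 - (1 + γ))]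
    · rw [div_lt_one (by positivity)]
      nlinarith
  · push_neg at hA hB
    set s := Real.sqrt ((1 - 2 * γ) ^ 2 - 4 * γ) with hs
    have hD : (0:ℝ) ≤ (1 - 2 * γ) ^ 2 - 4 * γ := by nlinarith
    have hs2 : s ^ 2 = (1 - 2 * γ) ^ 2 - 4 * γ := Real.sq_sqrt hD
    have hs1 : 1 ≤ s := by
      have hD1 : (1:ℝ) ≤ (1 - 2 * γ) ^ 2 - 4 * γ := by nlinarith
      nlinarith [Real.sqrt_nonneg ((1 - 2 * γ) ^ 2 - 4 * γ), hs2]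
    constructor
    · rw [le_div_iff₀ (by positivity)]
      rcases le_or_gt (6 * γ * x1) (1 + 2 * γ + s) with h | h
      · nlinarith
      · -- x1 beyond the larger root; P = 6γx1 - (1+2γ) - s ≥ 0
        nlinarith [mul_nonneg (by linarith : (0:ℝ) ≤ 6 * γ * x1 - (1 + 2 * γ) - s)
          (by linarith : (0:ℝ) ≤ (6 * γ * x1 - (1 + 2 * γ) - s) + 2 * s - 2)]
    · rw [div_lt_one (by positivity)]
      have : s < 4 * γ - 1 := by
        have h4 : (0:ℝ) < 4 * γ - 1 := by linarith
        nlinarith [Real.sqrt_nonneg ((1 - 2 * γ) ^ 2 - 4 * γ)]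
      linarith
end

section
/- Let γ > 1/3 and let 1 ≥ x_1 > x_2 > ... > x_k > 0 satisfy the FOC recurrence x_{i+1} = 2x_i - x_{i-1} + γ(2x_i - 3x_i²) for 1 ≤ i ≤ k (with x_0 = 1, x_{k+1} = 0). Then at most one index i ∈ {1,...,k} satisfies x_i > 2/3. -/
open Finset

/-- For γ > 1/3, in any portfolio `1 ≥ x_1 > ⋯ > x_k > 0` satisfying the
FOC recurrence `x_{i+1} = 2x_i - x_{i-1} + γ(2x_i - 3x_i²)` for `1 ≤ i ≤ k`
(with `x_0 = 1`, `x_{k+1} = 0`), at most one index `i ∈ {1,…,k}` has `x_i > 2/3`. -/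
theorem stmt_7 (γ : ℝ) (hγ : 1 / 3 < γ) (k : ℕ) (x : ℕ → ℝ)
    (hx0 : x 0 = 1) (hxk1 : x (k + 1) = 0) (hx1 : x 1 ≤ 1)
    (hdec : ∀ i, 1 ≤ i → i < k → x (i + 1) < x i) (hpos : 0 < x k)
    (hrec : ∀ i, 1 ≤ i → i ≤ k →
      x (i + 1) = 2 * x i - x (i - 1) + γ * (2 * x i - 3 * (x i) ^ 2)) :
    ((Finset.Icc 1 k).filter fun i => 2 / 3 < x i).card ≤ 1 := by
  by_contra h
  push_neg at h
  obtain ⟨a, ha, b, hb, hab⟩ := Finset.one_lt_card.mp h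
  simp only [mem_filter, mem_Icc] at ha hb
  have mono : ∀ i, 1 ≤ i → ∀ j, i ≤ j → j ≤ k → x j ≤ x i := by
    intro i hi j hij
    induction j, hij using Nat.le_induction with
    | base => intro _; exact le_refl _
    | succ n hn ih =>
      intro hnk
      have hk : n < k := Nat.lt_of_succ_le hnk
      exact le_trans (hdec n (hi.trans hn) hk).le (ih hk.le)
  -- wlog a < b
  have key : ∀ a b : ℕ, a < b → 1 ≤ a ∧ a ≤ k → b ≤ k → 2/3 < x a → 2/3 < x b → False := by
    intro a b hlt ⟨ha1, hak⟩ hbk hxa hxb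
    have hb2 : 2 ≤ b := by omega
    have hx2b : x b ≤ x 2 := mono 2 (by norm_num) b (by omega) hbk
    have hx1a : x a ≤ x 1 := mono 1 (by norm_num) a ha1 hak
    have h2 : (2:ℝ)/3 < x 2 := lt_of_lt_of_le hxb hx2b
    have h1 : (2:ℝ)/3 < x 1 := lt_of_lt_of_le hxa hx1a
    have hk1 : 1 ≤ k := by omega
    have hr := hrec 1 (le_refl _) hk1
    simp only [hx0] at hr
    norm_num at hr
    nlinarith [mul_nonneg (sub_nonneg.mpr hx1) (le_of_lt (sub_pos.mpr hγ)),
      mul_pos (sub_pos.mpr h1) (sub_pos.mpr hγ),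
      mul_nonneg (sub_nonneg.mpr hx1) (le_of_lt (sub_pos.mpr h1)),
      sq_nonneg (x 1 - 1), sq_nonneg (3 * x 1 - 2)]
  rcases lt_or_gt_of_ne hab with hlt | hgt
  · exact key a b hlt ⟨ha.1.1, ha.1.2⟩ hb.1.2 ha.2 hb.2
  · exact key b a hgt ⟨hb.1.1, hb.1.2⟩ ha.1.2 hb.2 ha.2
end

section
/- Let 0 < γ < 1/3 and let 1 ≥ x_1 > x_2 > ... > x_k > 0 satisfy the FOC recurrence x_{i+1} = 2x_i - x_{i-1} + γ(2x_i - 3x_i²) for 1 ≤ i ≤ k (with x_0 = 1, x_{k+1} = 0). Then the number of indices i ∈ {1,...,k} with x_i > 2/3 is at most 1 + 1/(3γ). -/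
open Finset

set_option maxHeartbeats 2000000

/-- For 0 < γ < 1/3, in any portfolio `1 ≥ x_1 > ⋯ > x_k > 0` satisfying
the FOC recurrence `x_{i+1} = 2x_i - x_{i-1} + γ(2x_i - 3x_i²)` for `1 ≤ i ≤ k`
(with `x_0 = 1`, `x_{k+1} = 0`), the number of indices `i ∈ {1,…,k}` with
`x_i > 2/3` is at most `1 + 1/(3γ)`. -/
theorem stmt_8 (γ : ℝ) (hγ0 : 0 < γ) (hγ : γ < 1 / 3) (k : ℕ) (x : ℕ → ℝ)
    (hx0 : x 0 = 1) (hxk1 : x (k + 1) = 0) (hx1 : x 1 ≤ 1)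
    (hdec : ∀ i, 1 ≤ i → i < k → x (i + 1) < x i) (hpos : 0 < x k)
    (hrec : ∀ i, 1 ≤ i → i ≤ k →
      x (i + 1) = 2 * x i - x (i - 1) + γ * (2 * x i - 3 * (x i) ^ 2)) :
    ((((Finset.Icc 1 k).filter fun i => 2 / 3 < x i).card : ℝ)) ≤ 1 + 1 / (3 * γ) := by
  have h3γ : (0:ℝ) < 3 * γ := by linarith
  have mono : ∀ a b : ℕ, 1 ≤ a → a ≤ b → b ≤ k → x b ≤ x a := by
    intro a b ha hab hbk
    induction b with
    | zero => omega
    | succ n ih =>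
      rcases Nat.lt_or_ge a (n+1) with h | h
      · have h1 : x (n+1) < x n := hdec n (by omega) (by omega)
        have h2 : x n ≤ x a := ih (by omega) (by omega)
        linarith
      · have he : a = n + 1 := by omega
        rw [he]
  by_cases hsmall : (((Finset.Icc 1 k).filter fun i => 2 / 3 < x i).card) ≤ 2
  · have h1 : (1:ℝ) ≤ 1 / (3 * γ) := by
      rw [le_div_iff₀ h3γ]; linarith
    have h2 : ((((Finset.Icc 1 k).filter fun i => 2 / 3 < x i).card : ℝ)) ≤ 2 := by
      exact_mod_cast hsmall
    linarith
  push_neg at hsmall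
  have hne : ((Finset.Icc 1 k).filter fun i => 2 / 3 < x i).Nonempty := by
    rw [← Finset.card_pos]; omega
  set m := (((Finset.Icc 1 k).filter fun i => 2 / 3 < x i)).max' hne with hm
  have hmF := Finset.max'_mem _ hne
  rw [← hm] at hmF
  rw [Finset.mem_filter, Finset.mem_Icc] at hmF
  obtain ⟨⟨hm1, hmk⟩, hxm⟩ := hmF
  have habove : ∀ i, 1 ≤ i → i ≤ m → 2/3 < x i := by
    intro i h1 h2
    exact lt_of_lt_of_le hxm (mono i m h1 h2 hmk)
  have hFeq : ((Finset.Icc 1 k).filter fun i => 2 / 3 < x i) = Finset.Icc 1 m := by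
    ext i
    simp only [Finset.mem_filter, Finset.mem_Icc]
    constructor
    · rintro ⟨⟨h1, h2⟩, h3⟩
      refine ⟨h1, ?_⟩
      rw [hm]
      exact Finset.le_max' _ i (by simp only [Finset.mem_filter, Finset.mem_Icc]; exact ⟨⟨h1, h2⟩, h3⟩)
    · rintro ⟨h1, h2⟩
      exact ⟨⟨h1, le_trans h2 hmk⟩, habove i h1 h2⟩
  rw [hFeq, Nat.card_Icc] at hsmall ⊢
  simp only [Nat.add_sub_cancel] at hsmall ⊢
  have hm3 : 3 ≤ m := by omega
  by_contra hcon
  push_neg at hcon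
  have hγm : 1 < 3 * γ * ((m:ℝ) - 1) := by
    have h1 : 1 / (3*γ) < (m:ℝ) - 1 := by linarith
    calc (1:ℝ) = (1/(3*γ)) * (3*γ) := by field_simp
    _ < ((m:ℝ)-1) * (3*γ) := mul_lt_mul_of_pos_right h1 h3γ
    _ = 3 * γ * ((m:ℝ)-1) := by ring
  clear hm
  clear_value m
  -- gap recurrence
  have hrec' : ∀ j, j < k → x (j+1) - x (j+2) = x j - x (j+1) + γ * (3 * (x (j+1))^2 - 2 * (x (j+1))) := by
    intro j hj
    have h := hrec (j+1) (by omega) (by omega)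
    simp only [Nat.add_sub_cancel] at h
    have h2 : x (j+1+1) = x (j+2) := by norm_num
    rw [h2] at h
    linear_combination -h
  have hg00 : 0 ≤ x 0 - x 1 := by rw [hx0]; linarith
  have hφ : ∀ i, 2*γ*(x i - 2/3) ≤ γ * (3*(x i)^2 - 2*(x i)) := by
    intro i
    linarith [mul_nonneg hγ0.le (sq_nonneg (x i - 2/3)), sq_nonneg (x i - 2/3)]
  -- gaps are monotone on [0, m]
  have hmono_g : ∀ a b : ℕ, a ≤ b → b ≤ m → x a - x (a+1) ≤ x b - x (b+1) := by
    intro a b hab hbm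
    induction b with
    | zero =>
      have : a = 0 := by omega
      rw [this]
    | succ n ih =>
      rcases Nat.lt_or_ge a (n+1) with h | h
      · have he := hrec' n (by omega)
        have hp := hφ (n+1)
        have hx23 := habove (n+1) (by omega) (by omega)
        have hpp : 0 < γ * (x (n+1) - 2/3) := mul_pos hγ0 (by linarith)
        have h2 := ih (by omega) (by omega)
        have h3 : x (n+2) = x (n+1+1) := by norm_num
        rw [← h3]
        linarith
      · have he : a = n+1 := by omega
        rw [he]
  have lemA : ∀ i, 1 ≤ i → ∀ d, i + d ≤ m → (d:ℝ) * (x i - x (i+1)) ≤ x i - x (i + d) := by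
    intro i hi d
    induction d with
    | zero => intro _; simp
    | succ n ih =>
      intro hd
      have h1 := ih (by omega)
      have h2 := hmono_g i (i+n) (by omega) (by omega)
      have h4 : i + (n+1) = i + n + 1 := rfl
      rw [h4]
      push_cast
      linarith
  have lemB : ∀ i, 1 ≤ i → i ≤ m → 2*γ*(i:ℝ)*(x i - 2/3) ≤ x i - x (i+1) := by
    intro i hi
    induction i, hi using Nat.le_induction with
    | base =>
      intro h1m
      have e := hrec' 0 (by omega)
      have hp := hφ 1
      have h2 : x (0+1) = x 1 := by norm_num
      have h3 : x (0+2) = x 2 := by norm_num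
      rw [h2, h3] at e
      have h4 : x (1+1) = x 2 := by norm_num
      rw [h4]
      push_cast
      linarith
    | succ n hn ih =>
      intro hnm
      have e := hrec' n (by omega)
      have hp := hφ (n+1)
      have ihh := ih (by omega)
      have hmono2 : x (n+1) ≤ x n := mono n (n+1) (by omega) (by omega) (by omega)
      have hmul : 2*γ*(n:ℝ)*(x (n+1) - 2/3) ≤ 2*γ*(n:ℝ)*(x n - 2/3) := by
        apply mul_le_mul_of_nonneg_left (by linarith) (by positivity)
      have h3 : x (n+2) = x (n+1+1) := by norm_num
      rw [h3] at e
      push_cast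
      linarith
  have hstar : ∀ i, 1 ≤ i → i ≤ m → 2*γ*(i:ℝ)*((m:ℝ) - (i:ℝ)) < 1 := by
    intro i h1 h2
    have hsi : 0 < x i - 2/3 := by have := habove i h1 h2; linarith
    have hA := lemA i h1 (m - i) (by omega)
    rw [show i + (m - i) = m from by omega] at hA
    have hcast : ((m - i : ℕ):ℝ) = (m:ℝ) - (i:ℝ) := Nat.cast_sub h2
    rw [hcast] at hA
    have hB := lemB i h1 h2
    have hd0 : (0:ℝ) ≤ (m:ℝ) - (i:ℝ) := by
      have : (i:ℝ) ≤ (m:ℝ) := by exact_mod_cast h2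
      linarith
    have h5 : ((m:ℝ)-(i:ℝ)) * (2*γ*(i:ℝ)*(x i - 2/3)) ≤ ((m:ℝ)-(i:ℝ)) * (x i - x (i+1)) :=
      mul_le_mul_of_nonneg_left hB hd0
    have h6 : x i - x m < x i - 2/3 := by linarith
    nlinarith [h5, hA, h6, hsi]
  rcases (show m = 3 ∨ m = 4 ∨ 5 ≤ m by omega) with rfl | rfl | hm5
  · -- m = 3
    have e1 := hrec' 0 (by omega)
    have e2 := hrec' 1 (by omega)
    norm_num at e1 e2
    rw [hx0] at e1
    have a1 := habove 1 (by omega) (by omega)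
    have a2 := habove 2 (by omega) (by omega)
    have a3 := habove 3 (by omega) (by omega)
    have hmg := hmono_g 1 2 (by omega) (by omega)
    norm_num at hmg
    have hq1 := hφ 1
    -- g1 ≥ 2γ s1
    have hg1lb : 2*γ*(x 1 - 2/3) ≤ x 1 - x 2 := by linarith
    -- 4γ < 1
    have hA4 : 4*γ*(x 1 - 2/3) < x 1 - 2/3 := by linarith
    have hγ4 : 4*γ < 1 := by
      by_contra hcc
      push_neg at hcc
      have := mul_le_mul_of_nonneg_right hcc (show (0:ℝ) ≤ x 1 - 2/3 by linarith)
      linarith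
    -- γ ≤ g 1
    have k1 : (0:ℝ) ≤ 1 - x 1 := by linarith
    have k2 : (0:ℝ) ≤ 1 - γ*(3*(x 1)+1) := by
      have hh : γ*(3*(x 1)+1) ≤ γ*4 := mul_le_mul_of_nonneg_left (by linarith) hγ0.le
      linarith
    have hI1 : γ ≤ x 1 - x 2 := by linarith [mul_nonneg k1 k2]
    have hs2 : x 2 - 2/3 ≤ 1/3 - γ := by linarith
    have idt : 3*(x 2)^2 - 2*(x 2) = 3*(x 2 - 2/3)^2 + 2*(x 2 - 2/3) := by ring
    rw [idt] at e2
    have hv : x 2 - x 3 < x 2 - 2/3 := by linarith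
    -- final contradiction: v > γ(1+2v+3v²), v ≤ 1/3-γ, 6γ > 1
    have h6γ : 1 < 6*γ := by push_cast at hγm; linarith
    have hvpos : 0 < x 2 - 2/3 := by linarith
    have hprod1 : (0:ℝ) ≤ (6*γ - 1) * (1 + 2*(x 2 - 2/3) + 3*(x 2 - 2/3)^2) := by
      apply mul_nonneg (by linarith)
      nlinarith [sq_nonneg (x 2 - 2/3)]
    have hprod2 : (0:ℝ) < (1 - 3*(x 2 - 2/3)) * (1 - (x 2 - 2/3)) := by
      apply mul_pos <;> · rw [sub_pos]; nlinarith
    linarith [e2, hI1, hv, hprod1, hprod2]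
  · -- m = 4
    have e1 := hrec' 0 (by omega)
    have e2 := hrec' 1 (by omega)
    have e3 := hrec' 2 (by omega)
    norm_num at e1 e2 e3
    rw [hx0] at e1
    have a1 := habove 1 (by omega) (by omega)
    have a2 := habove 2 (by omega) (by omega)
    have a3 := habove 3 (by omega) (by omega)
    have a4 := habove 4 (by omega) (by omega)
    have hmg2 := hmono_g 1 2 (by omega) (by omega)
    have hmg3 := hmono_g 1 3 (by omega) (by omega)
    norm_num at hmg2 hmg3
    have hq1 := hφ 1
    have hg1lb : 2*γ*(x 1 - 2/3) ≤ x 1 - x 2 := by linarith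
    -- 6γ < 1 : s1 > g1+g2+g3 ≥ 3 g1 ≥ 6γ s1
    have hA6 : 6*γ*(x 1 - 2/3) < x 1 - 2/3 := by linarith
    have hγ6 : 6*γ < 1 := by
      by_contra hcc
      push_neg at hcc
      have := mul_le_mul_of_nonneg_right hcc (show (0:ℝ) ≤ x 1 - 2/3 by linarith)
      linarith
    have k1 : (0:ℝ) ≤ 1 - x 1 := by linarith
    have k2 : (0:ℝ) ≤ 1 - γ*(3*(x 1)+1) := by
      have hh : γ*(3*(x 1)+1) ≤ γ*4 := mul_le_mul_of_nonneg_left (by linarith) hγ0.le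
      linarith
    have hI1 : γ ≤ x 1 - x 2 := by linarith [mul_nonneg k1 k2]
    have hs2 : x 2 - 2/3 ≤ 1/3 - γ := by linarith
    have hx32 : x 3 ≤ x 2 := mono 2 3 (by omega) (by omega) (by omega)
    have hs3 : x 3 - 2/3 ≤ 1/3 - γ := by linarith
    have idt2 : 3*(x 2)^2 - 2*(x 2) = 3*(x 2 - 2/3)^2 + 2*(x 2 - 2/3) := by ring
    have idt3 : 3*(x 3)^2 - 2*(x 3) = 3*(x 3 - 2/3)^2 + 2*(x 3 - 2/3) := by ring
    rw [idt2] at e2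
    rw [idt3] at e3
    -- φ(s2) ≥ φ(s3)
    have hφmono : 3*(x 3 - 2/3)^2 + 2*(x 3 - 2/3) ≤ 3*(x 2 - 2/3)^2 + 2*(x 2 - 2/3) := by
      have hf : (0:ℝ) ≤ (x 2 - x 3) * (3*((x 2 - 2/3) + (x 3 - 2/3)) + 2) :=
        mul_nonneg (by linarith) (by linarith)
      nlinarith [hf]
    have hφm' : γ * (3*(x 3 - 2/3)^2 + 2*(x 3 - 2/3)) ≤ γ * (3*(x 2 - 2/3)^2 + 2*(x 2 - 2/3)) :=
      mul_le_mul_of_nonneg_left hφmono hγ0.le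
    -- g3 ≥ γ + 2γ φ(s3)
    have hg3 : γ + 2*(γ * (3*(x 3 - 2/3)^2 + 2*(x 3 - 2/3))) ≤ x 3 - x 4 := by
      linarith [e2, e3, hI1, hφm']
    have hv : x 3 - x 4 < x 3 - 2/3 := by linarith
    have h9γ : 1 < 9*γ := by push_cast at hγm; linarith
    have hvpos : 0 < x 3 - 2/3 := by linarith
    have hprod1 : (0:ℝ) ≤ (9*γ - 1) * (1 + 4*(x 3 - 2/3) + 6*(x 3 - 2/3)^2) := by
      apply mul_nonneg (by linarith)
      nlinarith [sq_nonneg (x 3 - 2/3)]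
    have hprod2 : (0:ℝ) < (1 - 2*(x 3 - 2/3)) * (1 - 3*(x 3 - 2/3)) := by
      apply mul_pos <;> · rw [sub_pos]; nlinarith
    linarith [hg3, hv, hprod1, hprod2]
  · -- m ≥ 5
    have hq1 : 1 ≤ m/2 := by omega
    have hq2 : m/2 ≤ m := by omega
    have hs := hstar (m/2) hq1 hq2
    have hkey : 3*((m:ℝ)-1) ≤ 2*((m/2:ℕ):ℝ)*((m:ℝ) - ((m/2:ℕ):ℝ)) := by
      rcases (show m % 2 = 0 ∨ m % 2 = 1 by omega) with hr | hr
      · have hq3 : 3 ≤ m/2 := by omega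
        have hmeq : (m:ℝ) = 2*((m/2:ℕ):ℝ) := by exact_mod_cast (by omega : m = 2*(m/2))
        rw [hmeq]
        have hq3' : (3:ℝ) ≤ ((m/2:ℕ):ℝ) := by exact_mod_cast hq3
        have hn0 : (0:ℝ) ≤ ((m/2:ℕ):ℝ) := by positivity
        nlinarith [mul_nonneg (by linarith : (0:ℝ) ≤ ((m/2:ℕ):ℝ) - 3) hn0]
      · have hq3 : 2 ≤ m/2 := by omega
        have hmeq : (m:ℝ) = 2*((m/2:ℕ):ℝ) + 1 := by exact_mod_cast (by omega : m = 2*(m/2)+1)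
        rw [hmeq]
        have hq3' : (2:ℝ) ≤ ((m/2:ℕ):ℝ) := by exact_mod_cast hq3
        have hn0 : (0:ℝ) ≤ ((m/2:ℕ):ℝ) := by positivity
        nlinarith [mul_nonneg (by linarith : (0:ℝ) ≤ ((m/2:ℕ):ℝ) - 2) hn0]
    have h' := mul_le_mul_of_nonneg_left hkey hγ0.le
    linarith [h', hs, hγm]
end

section
/- Let 0 < c < 1 and m ∈ ℕ, and let 1 ≥ x_1 > x_2 > ... > x_k ≥ 0 be any k-portfolio (with x_0 = 1) in which at most m of the schools satisfy x_i > c. Then the true expected payoff satisfies Σ_{i=1}^k x_i(x_{i-1} - x_i) ≤ c²/2 + (1-c²)/2 - (1-c)²/(2(m+1)) = 1/2 - (1-c)²/(2(m+1)). -/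
open Finset

/-- Let 0 < c < 1 and m ∈ ℕ. For any k-portfolio
`1 ≥ x_1 > ⋯ > x_k ≥ 0` (with `x_0 = 1`) in which at most m schools satisfy
`x_i > c`, the true expected payoff satisfies
`∑_{i=1}^k x_i (x_{i-1} - x_i) ≤ 1/2 - (1-c)²/(2(m+1))`. -/
theorem stmt_11 (c : ℝ) (hc0 : 0 < c) (hc1 : c < 1) (m k : ℕ) (x : ℕ → ℝ)
    (hx0 : x 0 = 1) (hx1 : x 1 ≤ 1)
    (hdec : ∀ i, 1 ≤ i → i < k → x (i + 1) < x i) (hxk : 0 ≤ x k)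
    (hcount : ((Finset.Icc 1 k).filter fun i => c < x i).card ≤ m) :
    ∑ i ∈ Finset.Icc 1 k, x i * (x (i - 1) - x i)
      ≤ 1 / 2 - (1 - c) ^ 2 / (2 * ((m : ℝ) + 1)) := by
  -- monotonicity on [1, k]
  have hmono : ∀ j i, 1 ≤ i → i ≤ j → j ≤ k → x j ≤ x i := by
    intro j
    induction j with
    | zero => intro i hi hij _; omega
    | succ n ih =>
      intro i hi hij hjk
      rcases Nat.eq_or_lt_of_le hij with h | h
      · exact le_of_eq (by rw [h])
      · have hin : i ≤ n := by omega
        have h1n : 1 ≤ n := le_trans hi hin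
        have h2 := hdec n h1n (by omega)
        have h3 := ih i hi hin (by omega)
        linarith
  -- the extended sequence and the gaps
  set y : ℕ → ℝ := fun i => if i ≤ k then x i else 0 with hy
  set g : ℕ → ℝ := fun i => y i - y (i + 1) with hg
  have hgnn : ∀ i, i < k + 1 → 0 ≤ g i := by
    intro i hik
    simp only [hg, hy]
    rcases Nat.lt_or_ge i k with hlt | hge
    · rw [if_pos (by omega), if_pos (by omega)]
      rcases Nat.eq_zero_or_pos i with h0 | h0
      · subst h0; rw [hx0]; linarith
      · linarith [hdec i h0 hlt]
    · have hik' : i = k := by omega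
      subst hik'
      rw [if_pos le_rfl, if_neg (by omega)]
      linarith
  have hy0 : y 0 = 1 := by simp [hy, hx0]
  set s : ℕ := min (m + 1) (k + 1) with hs
  have hsum_g : ∑ i ∈ Finset.range s, g i = 1 - y s := by
    rw [hg, Finset.sum_range_sub' y s, hy0]
  have hys : y s ≤ c := by
    rcases le_or_gt (k + 1) (m + 1) with h | h
    · have : s = k + 1 := by omega
      rw [this]
      simp only [hy, if_neg (by omega : ¬ k + 1 ≤ k)]
      linarith
    · have hsm : s = m + 1 := by omega
      have hmk : m + 1 ≤ k := by omega
      rw [hsm]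
      simp only [hy, if_pos hmk]
      by_contra hcon
      push_neg at hcon
      have hsub : Finset.Icc 1 (m + 1) ⊆
          (Finset.Icc 1 k).filter fun i => c < x i := by
        intro i hi
        simp only [Finset.mem_Icc] at hi
        simp only [Finset.mem_filter, Finset.mem_Icc]
        refine ⟨⟨hi.1, le_trans hi.2 hmk⟩, lt_of_lt_of_le hcon ?_⟩
        exact hmono (m + 1) i hi.1 hi.2 hmk
      have := Finset.card_le_card hsub
      rw [Nat.card_Icc] at this
      omega
  -- sum of squares of all gaps
  set S2 : ℝ := (∑ i ∈ Finset.range k, (x i - x (i + 1)) ^ 2) + x k ^ 2 with hS2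
  have hS2eq : S2 = ∑ i ∈ Finset.range (k + 1), g i ^ 2 := by
    rw [hS2, Finset.sum_range_succ]
    congr 1
    · refine Finset.sum_congr rfl fun i hi => ?_
      simp only [Finset.mem_range] at hi
      simp only [hg, hy, if_pos (by omega : i ≤ k), if_pos (by omega : i + 1 ≤ k)]
    · simp only [hg, hy, if_pos le_rfl, if_neg (by omega : ¬ k + 1 ≤ k)]
      ring
  have hS2nn : 0 ≤ S2 := by positivity
  -- lower bound on S2
  have hkey : (1 - c) ^ 2 / ((m : ℝ) + 1) ≤ S2 := by
    have hsums : (1 : ℝ) - c ≤ ∑ i ∈ Finset.range s, g i := by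
      rw [hsum_g]; linarith
    have hcs : (∑ i ∈ Finset.range s, g i) ^ 2
        ≤ (s : ℝ) * ∑ i ∈ Finset.range s, g i ^ 2 := by
      simpa using sq_sum_le_card_mul_sum_sq (s := Finset.range s) (f := g)
    have hsq : (1 - c) ^ 2 ≤ (∑ i ∈ Finset.range s, g i) ^ 2 := by
      have h1c : (0 : ℝ) ≤ 1 - c := by linarith
      exact pow_le_pow_left₀ h1c hsums 2
    have hsub : ∑ i ∈ Finset.range s, g i ^ 2 ≤ ∑ i ∈ Finset.range (k + 1), g i ^ 2 := by
      refine Finset.sum_le_sum_of_subset_of_nonneg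
        (Finset.range_subset_range.mpr (by omega)) fun i _ _ => by positivity
    have hsm : (s : ℝ) ≤ (m : ℝ) + 1 := by
      have : s ≤ m + 1 := min_le_left _ _
      exact_mod_cast this
    have hchain : (1 - c) ^ 2 ≤ ((m : ℝ) + 1) * S2 := by
      have h1 : (s : ℝ) * ∑ i ∈ Finset.range s, g i ^ 2 ≤ (s : ℝ) * S2 := by
        rw [hS2eq]
        exact mul_le_mul_of_nonneg_left hsub (by positivity)
      have h2 : (s : ℝ) * S2 ≤ ((m : ℝ) + 1) * S2 :=
        mul_le_mul_of_nonneg_right hsm hS2nn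
      linarith
    rw [div_le_iff₀ (by positivity)]
    linarith
  -- rewrite the payoff
  have hP : ∑ i ∈ Finset.Icc 1 k, x i * (x (i - 1) - x i)
      = ∑ i ∈ Finset.range k, x (i + 1) * (x i - x (i + 1)) := by
    rw [← Finset.Ico_add_one_right_eq_Icc, Finset.sum_Ico_eq_sum_range]
    refine Finset.sum_congr (by norm_num) fun i _ => ?_
    have h1 : 1 + i = i + 1 := Nat.add_comm 1 i
    rw [h1, Nat.add_sub_cancel]
  have htel : ∑ i ∈ Finset.range k, ((x i) ^ 2 - (x (i + 1)) ^ 2)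
      = 1 - x k ^ 2 := by
    rw [Finset.sum_range_sub' (fun i => x i ^ 2) k, hx0]
    norm_num
  have hPval : ∑ i ∈ Finset.Icc 1 k, x i * (x (i - 1) - x i) = 1 / 2 - S2 / 2 := by
    rw [hP]
    have : ∀ i ∈ Finset.range k, x (i + 1) * (x i - x (i + 1))
        = ((x i) ^ 2 - (x (i + 1)) ^ 2) / 2 - (x i - x (i + 1)) ^ 2 / 2 :=
      fun i _ => by ring
    rw [Finset.sum_congr rfl this, Finset.sum_sub_distrib, ← Finset.sum_div,
      ← Finset.sum_div, htel, hS2]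
    ring
  rw [hPval]
  have hdd : (1 - c) ^ 2 / (2 * ((m : ℝ) + 1)) = (1 - c) ^ 2 / ((m : ℝ) + 1) / 2 := by
    rw [div_div, mul_comm]
  rw [hdd]
  linarith
end

section
/- Let γ > 0, k ≥ 1, and let x_0, x_1, ..., x_{k+1} be reals with x_0 = 1 and x_{k+1} = 0 satisfying the recurrence x_{i+1} = 2x_i - x_{i-1} + γ(2x_i - 3x_i²) for all 1 ≤ i ≤ k. Suppose δ̲_i and δ̄_i are reals with δ̲_i ≤ -(2x_i - 3x_i²) ≤ δ̄_i for every 1 ≤ i ≤ k. Then for every 1 ≤ i ≤ k: ((k+1-i)/(k+2-i))·x_{i-1} + (γ/(k+2-i))·Σ_{j=1}^{k+1-i} j·δ̲_{k+1-j} ≤ x_i ≤ ((k+1-i)/(k+2-i))·x_{i-1} + (γ/(k+2-i))·Σ_{j=1}^{k+1-i} j·δ̄_{k+1-j}. -/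
open Finset

/-- For a sequence satisfying the FOC recurrence with `x_0 = 1`,
`x_{k+1} = 0`, and bounds `δ̲_i ≤ -(2x_i - 3x_i²) ≤ δ̄_i`, every `x_i` satisfies
`((k+1-i)/(k+2-i))·x_{i-1} + (γ/(k+2-i))·∑_{j=1}^{k+1-i} j·δ̲_{k+1-j} ≤ x_i ≤`
`((k+1-i)/(k+2-i))·x_{i-1} + (γ/(k+2-i))·∑_{j=1}^{k+1-i} j·δ̄_{k+1-j}`. -/
theorem stmt_13 (γ : ℝ) (hγ : 0 < γ) (k : ℕ) (hk : 1 ≤ k) (x : ℕ → ℝ)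
    (hx0 : x 0 = 1) (hxk1 : x (k + 1) = 0)
    (hrec : ∀ i, 1 ≤ i → i ≤ k →
      x (i + 1) = 2 * x i - x (i - 1) + γ * (2 * x i - 3 * (x i) ^ 2))
    (δlo δhi : ℕ → ℝ)
    (hδ : ∀ i, 1 ≤ i → i ≤ k →
      δlo i ≤ -(2 * x i - 3 * (x i) ^ 2) ∧ -(2 * x i - 3 * (x i) ^ 2) ≤ δhi i) :
    ∀ i, 1 ≤ i → i ≤ k →
      ((k : ℝ) + 1 - (i : ℝ)) / ((k : ℝ) + 2 - (i : ℝ)) * x (i - 1)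
          + γ / ((k : ℝ) + 2 - (i : ℝ))
            * ∑ j ∈ Finset.Icc 1 (k + 1 - i), (j : ℝ) * δlo (k + 1 - j) ≤ x i ∧
      x i ≤ ((k : ℝ) + 1 - (i : ℝ)) / ((k : ℝ) + 2 - (i : ℝ)) * x (i - 1)
          + γ / ((k : ℝ) + 2 - (i : ℝ))
            * ∑ j ∈ Finset.Icc 1 (k + 1 - i), (j : ℝ) * δhi (k + 1 - j) := by
  set d : ℕ → ℝ := fun i => -(2 * x i - 3 * (x i) ^ 2) with hd
  have key : ∀ m : ℕ, ∀ i : ℕ, 1 ≤ i → i ≤ k → k - i = m →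
      ((k : ℝ) + 2 - i) * x i = ((k : ℝ) + 1 - i) * x (i - 1)
        + γ * ∑ j ∈ Finset.Icc 1 (k + 1 - i), (j : ℝ) * d (k + 1 - j) := by
    intro m
    induction m with
    | zero =>
      intro i h1 hik him
      have hieq : i = k := by omega
      subst hieq
      have h1' : i + 1 - i = 1 := by omega
      rw [h1', Finset.Icc_self, Finset.sum_singleton]
      have hr := hrec i h1 le_rfl
      rw [hxk1] at hr
      have : i + 1 - 1 = i := by omega
      rw [this]
      simp only [hd, Nat.cast_one]
      linarith [hr]
    | succ n ih =>
      intro i h1 hik him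
      have hi1 : i + 1 ≤ k := by omega
      have hih := ih (i + 1) (by omega) hi1 (by omega)
      have hr := hrec i h1 hik
      have e1 : k + 1 - i = (k + 1 - (i + 1)) + 1 := by omega
      have e2 : k + 1 - ((k + 1 - (i + 1)) + 1) = i := by omega
      rw [e1, Finset.sum_Icc_succ_top (by omega : 1 ≤ (k + 1 - (i + 1)) + 1), e2]
      have e3 : (i + 1 : ℕ) - 1 = i := by omega
      rw [e3] at hih
      push_cast at hih ⊢
      rw [Nat.cast_sub hik]
      simp only [hd]
      linear_combination hih - ((k : ℝ) - i + 1) * hr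
  intro i h1 hik
  have hid := key (k - i) i h1 hik rfl
  have hpos : (0 : ℝ) < (k : ℝ) + 2 - i := by
    have : (i : ℝ) ≤ k := by exact_mod_cast hik
    linarith
  have hsub : ∀ j ∈ Finset.Icc 1 (k + 1 - i), 1 ≤ k + 1 - j ∧ k + 1 - j ≤ k := by
    intro j hj
    simp only [Finset.mem_Icc] at hj
    omega
  have hlo : ∑ j ∈ Finset.Icc 1 (k + 1 - i), (j : ℝ) * δlo (k + 1 - j)
      ≤ ∑ j ∈ Finset.Icc 1 (k + 1 - i), (j : ℝ) * d (k + 1 - j) := by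
    apply Finset.sum_le_sum
    intro j hj
    obtain ⟨hj1, hj2⟩ := hsub j hj
    have := (hδ (k + 1 - j) hj1 hj2).1
    have hjpos : (0 : ℝ) ≤ (j : ℝ) := by positivity
    exact mul_le_mul_of_nonneg_left this hjpos
  have hhi : ∑ j ∈ Finset.Icc 1 (k + 1 - i), (j : ℝ) * d (k + 1 - j)
      ≤ ∑ j ∈ Finset.Icc 1 (k + 1 - i), (j : ℝ) * δhi (k + 1 - j) := by
    apply Finset.sum_le_sum
    intro j hj
    obtain ⟨hj1, hj2⟩ := hsub j hj
    have := (hδ (k + 1 - j) hj1 hj2).2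
    have hjpos : (0 : ℝ) ≤ (j : ℝ) := by positivity
    exact mul_le_mul_of_nonneg_left this hjpos
  have hxi : x i = ((k : ℝ) + 1 - i) / ((k : ℝ) + 2 - i) * x (i - 1)
      + γ / ((k : ℝ) + 2 - i) * ∑ j ∈ Finset.Icc 1 (k + 1 - i), (j : ℝ) * d (k + 1 - j) := by
    field_simp
    linarith [hid]
  constructor
  · rw [hxi]
    have : γ / ((k : ℝ) + 2 - i) ≥ 0 := by positivity
    nlinarith [mul_le_mul_of_nonneg_left hlo this]
  · rw [hxi]
    have : γ / ((k : ℝ) + 2 - i) ≥ 0 := by positivity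
    nlinarith [mul_le_mul_of_nonneg_left hhi this]
end

section
/- Let γ > 0, k ≥ 1, and let x_0, x_1, ..., x_{k+1} be reals with x_0 = 1 and x_{k+1} = 0 satisfying the recurrence x_{i+1} = 2x_i - x_{i-1} + γ(2x_i - 3x_i²) for all 1 ≤ i ≤ k. Suppose δ̲_i and δ̄_i are reals with δ̲_i ≤ -(2x_i - 3x_i²) ≤ δ̄_i for every 1 ≤ i ≤ k. Then for every 1 ≤ i ≤ k: x_i ≥ (k+1-i)/(k+1) + γ·((k+1-i)/(k+1))·Σ_{j=1}^{i-1} j·δ̲_j + γ·(i/(k+1))·Σ_{j=1}^{k+1-i} j·δ̲_{k+1-j}, and x_i ≤ (k+1-i)/(k+1) + γ·((k+1-i)/(k+1))·Σ_{j=1}^{i-1} j·δ̄_j + γ·(i/(k+1))·Σ_{j=1}^{k+1-i} j·δ̄_{k+1-j}. -/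
open Finset

private lemma zero_seq (k : ℕ) (e : ℕ → ℝ) (h0 : e 0 = 0) (hk1 : e (k+1) = 0)
    (hrec : ∀ i, 1 ≤ i → i ≤ k → e (i+1) = 2 * e i - e (i-1)) :
    ∀ i, i ≤ k + 1 → e i = 0 := by
  have hlin : ∀ i, i ≤ k + 1 → e i = i * e 1 := by
    intro i
    induction i using Nat.strong_induction_on with
    | _ i ih =>
      intro hi
      match i with
      | 0 => simpa using h0
      | 1 => simp
      | (n+2) =>
        have h := hrec (n+1) (by omega) (by omega)
        rw [show n+1-1 = n from rfl] at h
        rw [h, ih (n+1) (by omega) (by omega), ih n (by omega) (by omega)]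
        push_cast; ring
  have h1 : e 1 = 0 := by
    have h := hlin (k+1) le_rfl
    rw [hk1] at h
    have hne : ((k:ℝ)+1) ≠ 0 := by positivity
    have h2 : ((k:ℝ)+1) * e 1 = 0 := by push_cast at h; linarith
    exact (mul_eq_zero.mp h2.symm.symm).resolve_left hne
  intro i hi
  rw [hlin i hi, h1, mul_zero]

private lemma green_formula (γ : ℝ) (k : ℕ) (hk : 1 ≤ k) (x : ℕ → ℝ)
    (hx0 : x 0 = 1) (hxk1 : x (k + 1) = 0)
    (hrec : ∀ i, 1 ≤ i → i ≤ k →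
      x (i + 1) = 2 * x i - x (i - 1) + γ * (2 * x i - 3 * (x i) ^ 2)) :
    ∀ i, i ≤ k + 1 → x i = ((k:ℝ) + 1 - i) / ((k:ℝ) + 1)
      + γ * ∑ j ∈ Icc 1 k, (if j ≤ i then (j:ℝ) * ((k:ℝ)+1 - i) / ((k:ℝ)+1)
          else (i:ℝ) * ((k:ℝ)+1 - j) / ((k:ℝ)+1)) * (-(2 * x j - 3 * (x j) ^ 2)) := by
  set K : ℝ := (k:ℝ) + 1 with hK
  have hKpos : (0:ℝ) < K := by positivity
  have hKne : K ≠ 0 := ne_of_gt hKpos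
  set δ : ℕ → ℝ := fun j => -(2 * x j - 3 * (x j) ^ 2) with hδdef
  set g : ℕ → ℕ → ℝ := fun i j => if j ≤ i then (j:ℝ) * (K - i) / K else (i:ℝ) * (K - j) / K with hg
  set F : ℕ → ℝ := fun i => (K - i) / K + γ * ∑ j ∈ Icc 1 k, g i j * δ j with hF
  have hF0 : F 0 = 1 := by
    simp only [hF]
    have : ∀ j ∈ Icc 1 k, g 0 j * δ j = 0 := by
      intro j hj
      simp only [mem_Icc] at hj
      simp only [hg]
      rw [if_neg (by omega)]
      simp
    rw [Finset.sum_congr rfl this]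
    simp [hKne]
  have hFk1 : F (k+1) = 0 := by
    simp only [hF]
    have h1 : ∀ j ∈ Icc 1 k, g (k+1) j * δ j = 0 := by
      intro j hj
      simp only [mem_Icc] at hj
      simp only [hg]
      rw [if_pos (by omega)]
      have : K - ((k:ℕ)+1 : ℕ) = 0 := by push_cast [hK]; ring
      push_cast at this ⊢
      rw [this]; ring
    rw [Finset.sum_congr rfl h1]
    have : K - ((k:ℕ)+1 : ℕ) = 0 := by push_cast [hK]; ring
    push_cast at this ⊢
    rw [this]; simp
  have hFrec : ∀ i, 1 ≤ i → i ≤ k → F (i+1) = 2 * F i - F (i-1) - γ * δ i := by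
    intro i hi1 hik
    obtain ⟨m, rfl⟩ : ∃ m, i = m + 1 := ⟨i - 1, by omega⟩
    rw [show m + 1 - 1 = m from rfl]
    have hsum : ∑ j ∈ Icc 1 k, (g (m+2) j - 2 * g (m+1) j + g m j) * δ j = -δ (m+1) := by
      rw [Finset.sum_eq_single_of_mem (m+1) (by simp [mem_Icc]; omega)]
      · simp only [hg]
        rw [if_pos (by omega), if_pos le_rfl, if_neg (by omega)]
        push_cast
        field_simp
        ring
      · intro j hj hne
        simp only [mem_Icc] at hj
        rcases lt_or_gt_of_ne hne with hlt | hgt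
        · simp only [hg]
          rw [if_pos (by omega), if_pos (by omega), if_pos (by omega)]
          push_cast
          field_simp
          ring
        · simp only [hg]
          rcases eq_or_lt_of_le (Nat.succ_le_of_lt hgt) with heq | hlt2
          · rw [← heq]
            rw [if_pos le_rfl, if_neg (by omega), if_neg (by omega)]
            push_cast
            field_simp
            ring
          · rw [if_neg (by omega), if_neg (by omega), if_neg (by omega)]
            push_cast
            field_simp
            ring
    simp only [hF]
    have hlin : (K - ((m:ℝ) + 1 + 1)) / K = 2 * ((K - ((m:ℝ)+1)) / K) - (K - (m:ℝ)) / K := by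
      field_simp; ring
    have hsplit : ∑ j ∈ Icc 1 k, (g (m+2) j - 2 * g (m+1) j + g m j) * δ j
        = ∑ j ∈ Icc 1 k, g (m+2) j * δ j - 2 * ∑ j ∈ Icc 1 k, g (m+1) j * δ j
          + ∑ j ∈ Icc 1 k, g m j * δ j := by
      simp only [sub_mul, add_mul, mul_assoc]
      rw [Finset.sum_add_distrib, Finset.sum_sub_distrib, Finset.mul_sum]
    rw [hsplit] at hsum
    push_cast
    linear_combination hlin + γ * hsum
  have hzero := zero_seq k (fun i => x i - F i) (by simp [hx0, hF0]) (by simp [hxk1, hFk1])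
    (by
      intro i hi1 hik
      have h1 := hrec i hi1 hik
      have h2 := hFrec i hi1 hik
      have : γ * (2 * x i - 3 * (x i)^2) = -(γ * δ i) := by simp [hδdef]; ring
      rw [this] at h1
      linarith)
  intro i hi
  have := hzero i hi
  have : x i = F i := by linarith
  rw [this, hF]

/-- For a sequence satisfying the FOC recurrence with `x_0 = 1`,
`x_{k+1} = 0`, and bounds `δ̲_i ≤ -(2x_i - 3x_i²) ≤ δ̄_i`, every `x_i` satisfies
`x_i ≥ (k+1-i)/(k+1) + γ((k+1-i)/(k+1))∑_{j=1}^{i-1} j·δ̲_j + γ(i/(k+1))∑_{j=1}^{k+1-i} j·δ̲_{k+1-j}`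
and the analogous upper bound with `δ̄` in place of `δ̲`. -/
theorem stmt_14 (γ : ℝ) (hγ : 0 < γ) (k : ℕ) (hk : 1 ≤ k) (x : ℕ → ℝ)
    (hx0 : x 0 = 1) (hxk1 : x (k + 1) = 0)
    (hrec : ∀ i, 1 ≤ i → i ≤ k →
      x (i + 1) = 2 * x i - x (i - 1) + γ * (2 * x i - 3 * (x i) ^ 2))
    (δlo δhi : ℕ → ℝ)
    (hδ : ∀ i, 1 ≤ i → i ≤ k →
      δlo i ≤ -(2 * x i - 3 * (x i) ^ 2) ∧ -(2 * x i - 3 * (x i) ^ 2) ≤ δhi i) :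
    ∀ i, 1 ≤ i → i ≤ k →
      ((k : ℝ) + 1 - (i : ℝ)) / ((k : ℝ) + 1)
          + γ * (((k : ℝ) + 1 - (i : ℝ)) / ((k : ℝ) + 1))
            * ∑ j ∈ Finset.Icc 1 (i - 1), (j : ℝ) * δlo j
          + γ * ((i : ℝ) / ((k : ℝ) + 1))
            * ∑ j ∈ Finset.Icc 1 (k + 1 - i), (j : ℝ) * δlo (k + 1 - j) ≤ x i ∧
      x i ≤ ((k : ℝ) + 1 - (i : ℝ)) / ((k : ℝ) + 1)
          + γ * (((k : ℝ) + 1 - (i : ℝ)) / ((k : ℝ) + 1))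
            * ∑ j ∈ Finset.Icc 1 (i - 1), (j : ℝ) * δhi j
          + γ * ((i : ℝ) / ((k : ℝ) + 1))
            * ∑ j ∈ Finset.Icc 1 (k + 1 - i), (j : ℝ) * δhi (k + 1 - j) := by
  intro i hi1 hik
  set K : ℝ := (k:ℝ) + 1 with hK
  have hKpos : (0:ℝ) < K := by positivity
  have hKne : K ≠ 0 := ne_of_gt hKpos
  set δ : ℕ → ℝ := fun j => -(2 * x j - 3 * (x j) ^ 2) with hδdef
  have hkey := green_formula γ k hk x hx0 hxk1 hrec i (by omega)
  -- split the sum at i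
  have hsplit : ∑ j ∈ Icc 1 k, (if j ≤ i then (j:ℝ) * (K - i) / K
        else (i:ℝ) * (K - j) / K) * δ j
      = ∑ j ∈ Icc 1 (i-1), (if j ≤ i then (j:ℝ) * (K - i) / K
        else (i:ℝ) * (K - j) / K) * δ j
      + ∑ j ∈ Icc i k, (if j ≤ i then (j:ℝ) * (K - i) / K
        else (i:ℝ) * (K - j) / K) * δ j := by
    rw [show Icc 1 (i-1) = Ioc 0 (i-1) from (Finset.Icc_add_one_left_eq_Ioc 0 (i-1)).symm,
        show Icc i k = Ioc (i-1) k from by rw [← Finset.Icc_add_one_left_eq_Ioc]; congr 1; omega,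
        show Icc 1 k = Ioc 0 k from (Finset.Icc_add_one_left_eq_Ioc 0 k).symm]
    exact (Finset.sum_Ioc_consecutive _ (by omega) (by omega)).symm
  have hleft : ∑ j ∈ Icc 1 (i-1), (if j ≤ i then (j:ℝ) * (K - i) / K
        else (i:ℝ) * (K - j) / K) * δ j
      = ((K - i) / K) * ∑ j ∈ Icc 1 (i-1), (j:ℝ) * δ j := by
    rw [Finset.mul_sum]
    apply Finset.sum_congr rfl
    intro j hj
    simp only [mem_Icc] at hj
    rw [if_pos (by omega)]
    ring
  have hright : ∑ j ∈ Icc i k, (if j ≤ i then (j:ℝ) * (K - i) / K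
        else (i:ℝ) * (K - j) / K) * δ j
      = ((i:ℝ) / K) * ∑ j ∈ Icc 1 (k+1-i), (j:ℝ) * δ (k+1-j) := by
    rw [Finset.mul_sum]
    refine Finset.sum_nbij' (i := fun j => k+1-j) (j := fun j => k+1-j) ?_ ?_ ?_ ?_ ?_
    · intro j hj; simp only [mem_Icc] at hj ⊢; omega
    · intro j hj; simp only [mem_Icc] at hj ⊢; omega
    · intro j hj; simp only [mem_Icc] at hj; omega
    · intro j hj; simp only [mem_Icc] at hj; omega
    · intro j hj
      simp only [mem_Icc] at hj
      have hji : i ≤ j := hj.1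
      have h1 : (((k+1-j:ℕ)):ℝ) = K - j := by
        rw [hK]; push_cast [Nat.cast_sub (by omega : j ≤ k+1)]; ring
      have h2 : k + 1 - (k + 1 - j) = j := by omega
      rw [h1, h2]
      rcases eq_or_lt_of_le hji with heq | hlt
      · rw [if_pos (by omega), ← heq]
        ring
      · rw [if_neg (by omega)]
        ring
  rw [hsplit, hleft, hright] at hkey
  have hC1 : 0 ≤ γ * ((K - i) / K) := by
    apply mul_nonneg hγ.le
    apply div_nonneg _ hKpos.le
    rw [hK]
    have : (i:ℝ) ≤ k := by exact_mod_cast hik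
    linarith
  have hC2 : 0 ≤ γ * ((i:ℝ) / K) := by positivity
  have hS1lo : ∑ j ∈ Icc 1 (i-1), (j:ℝ) * δlo j ≤ ∑ j ∈ Icc 1 (i-1), (j:ℝ) * δ j := by
    apply Finset.sum_le_sum
    intro j hj
    simp only [mem_Icc] at hj
    exact mul_le_mul_of_nonneg_left (hδ j (by omega) (by omega)).1 (by positivity)
  have hS1hi : ∑ j ∈ Icc 1 (i-1), (j:ℝ) * δ j ≤ ∑ j ∈ Icc 1 (i-1), (j:ℝ) * δhi j := by
    apply Finset.sum_le_sum
    intro j hj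
    simp only [mem_Icc] at hj
    exact mul_le_mul_of_nonneg_left (hδ j (by omega) (by omega)).2 (by positivity)
  have hS2lo : ∑ j ∈ Icc 1 (k+1-i), (j:ℝ) * δlo (k+1-j) ≤ ∑ j ∈ Icc 1 (k+1-i), (j:ℝ) * δ (k+1-j) := by
    apply Finset.sum_le_sum
    intro j hj
    simp only [mem_Icc] at hj
    exact mul_le_mul_of_nonneg_left (hδ (k+1-j) (by omega) (by omega)).1 (by positivity)
  have hS2hi : ∑ j ∈ Icc 1 (k+1-i), (j:ℝ) * δ (k+1-j) ≤ ∑ j ∈ Icc 1 (k+1-i), (j:ℝ) * δhi (k+1-j) := by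
    apply Finset.sum_le_sum
    intro j hj
    simp only [mem_Icc] at hj
    exact mul_le_mul_of_nonneg_left (hδ (k+1-j) (by omega) (by omega)).2 (by positivity)
  constructor
  · have b1 := mul_le_mul_of_nonneg_left hS1lo hC1
    have b2 := mul_le_mul_of_nonneg_left hS2lo hC2
    rw [hkey]
    rw [hK] at b1 b2 ⊢
    nlinarith [b1, b2]
  · have b1 := mul_le_mul_of_nonneg_left hS1hi hC1
    have b2 := mul_le_mul_of_nonneg_left hS2hi hC2
    rw [hkey]
    rw [hK] at b1 b2 ⊢
    nlinarith [b1, b2]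
end

section
/- Let γ > 0, k ≥ 1, and let x_0, x_1, ..., x_{k+1} be reals with x_0 = 1, x_{k+1} = 0, x_i ∈ [0,1] for all i, satisfying the recurrence x_{i+1} = 2x_i - x_{i-1} + γ(2x_i - 3x_i²) for all 1 ≤ i ≤ k. Then for every 1 ≤ i ≤ k: (k+1-i)/(k+1) - (γ/3)·(i(k+1-i)/2) ≤ x_i ≤ (k+1-i)/(k+1) + γ·(i(k+1-i)/2). In particular |x_i - (k+1-i)/(k+1)| ≤ γ(k+1)²/8 for all i. -/
/-- Discrete maximum principle: a convex sequence with nonpositive endpoints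
is nonpositive on the whole interval. -/
lemma convex_le_zero (n : ℕ) (z : ℕ → ℝ) (h0 : z 0 ≤ 0) (hn : z (n+1) ≤ 0)
    (hc : ∀ j, j + 1 ≤ n → 2 * z (j+1) ≤ z j + z (j+2)) :
    ∀ i, i ≤ n + 1 → z i ≤ 0 := by
  have ha : ∀ i, i ≤ n → z (i+1) - z 0 ≤ ((i:ℝ)+1) * (z (i+1) - z i) := by
    intro i
    induction i with
    | zero => intro _; push_cast; ring_nf; nlinarith [hc]
    | succ j ih =>
      intro hj
      have h1 := ih (by omega)
      have h2 := hc j (by omega)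
      have hjc : (0:ℝ) ≤ (j:ℝ) + 1 := by positivity
      push_cast
      nlinarith [mul_le_mul_of_nonneg_left (sub_le_sub_right h2 (2 * z j)) hjc]
  have hb : ∀ m i, i + m = n → ((m:ℝ)+1) * (z (i+1) - z i) ≤ z (n+1) - z i := by
    intro m
    induction m with
    | zero => intro i hi; subst hi; push_cast; nlinarith
    | succ m ih =>
      intro i hi
      have h1 := ih (i+1) (by omega)
      have h2 := hc i (by omega)
      have hmc : (0:ℝ) ≤ (m:ℝ) + 1 := by positivity
      push_cast
      nlinarith [mul_le_mul_of_nonneg_left (sub_le_sub_right h2 (2 * z (i+1))) hmc]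
  intro i hi
  rcases Nat.eq_zero_or_pos i with h | h
  · subst h; exact h0
  rcases Nat.lt_or_ge i (n+1) with h' | h'
  · obtain ⟨j, rfl⟩ : ∃ j, i = j + 1 := ⟨i - 1, by omega⟩
    have hja := ha j (by omega)
    obtain ⟨m, hm⟩ : ∃ m, (j+1) + m = n := ⟨n - (j+1), by omega⟩
    have hjb := hb m (j+1) hm
    have h2 := hc j (by omega)
    have hjc : (0:ℝ) ≤ (j:ℝ) + 1 := by positivity
    have hmc : (0:ℝ) ≤ (m:ℝ) + 1 := by positivity
    rcases le_or_gt (z (j+1) - z j) 0 with hs | hs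
    · nlinarith [mul_nonpos_of_nonneg_of_nonpos hjc hs]
    · nlinarith [mul_le_mul_of_nonneg_left (le_of_lt hs) hmc,
        mul_le_mul_of_nonneg_left (sub_le_sub_right h2 (z (j+1))) hmc]
  · have : i = n + 1 := by omega
    subst this; exact hn

/-- For a sequence in [0,1] satisfying the FOC recurrence with
`x_0 = 1` and `x_{k+1} = 0`, every `x_i` satisfies
`(k+1-i)/(k+1) - (γ/3)(i(k+1-i)/2) ≤ x_i ≤ (k+1-i)/(k+1) + γ(i(k+1-i)/2)`;
in particular `|x_i - (k+1-i)/(k+1)| ≤ γ(k+1)²/8`. -/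
theorem stmt_15 (γ : ℝ) (hγ : 0 < γ) (k : ℕ) (hk : 1 ≤ k) (x : ℕ → ℝ)
    (hx0 : x 0 = 1) (hxk1 : x (k + 1) = 0)
    (hmem : ∀ i, i ≤ k + 1 → x i ∈ Set.Icc (0:ℝ) 1)
    (hrec : ∀ i, 1 ≤ i → i ≤ k →
      x (i + 1) = 2 * x i - x (i - 1) + γ * (2 * x i - 3 * (x i) ^ 2)) :
    ∀ i, 1 ≤ i → i ≤ k →
      (((k : ℝ) + 1 - (i : ℝ)) / ((k : ℝ) + 1)
          - γ / 3 * ((i : ℝ) * ((k : ℝ) + 1 - (i : ℝ)) / 2) ≤ x i ∧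
        x i ≤ ((k : ℝ) + 1 - (i : ℝ)) / ((k : ℝ) + 1)
          + γ * ((i : ℝ) * ((k : ℝ) + 1 - (i : ℝ)) / 2)) ∧
      |x i - ((k : ℝ) + 1 - (i : ℝ)) / ((k : ℝ) + 1)| ≤ γ * ((k : ℝ) + 1) ^ 2 / 8 := by
  set K : ℝ := (k:ℝ) + 1 with hK
  have hKpos : (0:ℝ) < K := by positivity
  -- linear interpolation and quadratic
  set L : ℕ → ℝ := fun i => (K - (i:ℝ)) / K with hL
  set q : ℕ → ℝ := fun i => (i:ℝ) * (K - (i:ℝ)) / 2 with hq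
  have hrec' : ∀ j, j + 1 ≤ k →
      x (j+2) = 2 * x (j+1) - x j + γ * (2 * x (j+1) - 3 * (x (j+1))^2) := by
    intro j hj
    have := hrec (j+1) (by omega) hj
    simpa using this
  -- upper bound sequence
  have hup : ∀ i, i ≤ k + 1 → x i - L i - γ * q i ≤ 0 := by
    apply convex_le_zero k
    · simp [hL, hq, hx0]
      field_simp
      exact le_rfl
    · simp [hL, hq, hxk1, hK]
    · intro j hj
      have hr := hrec' j hj
      have hm := hmem (j+1) (by omega)
      obtain ⟨hm0, hm1⟩ := hm
      simp only [hL, hq]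
      push_cast
      have hcancel : (K - (j:ℝ)) / K + (K - ((j:ℝ)+2)) / K = 2 * ((K - ((j:ℝ)+1)) / K) := by
        field_simp; ring
      nlinarith [hcancel, mul_nonneg hγ.le (mul_nonneg (sub_nonneg.2 hm1) (by linarith : (0:ℝ) ≤ 1 + 3 * x (j+1)))]
  -- lower bound sequence
  have hlo : ∀ i, i ≤ k + 1 → L i - γ/3 * q i - x i ≤ 0 := by
    apply convex_le_zero k
    · simp [hL, hq, hx0]
      field_simp
      exact le_rfl
    · simp [hL, hq, hxk1, hK]
    · intro j hj
      have hr := hrec' j hj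
      simp only [hL, hq]
      push_cast
      have hcancel : (K - (j:ℝ)) / K + (K - ((j:ℝ)+2)) / K = 2 * ((K - ((j:ℝ)+1)) / K) := by
        field_simp; ring
      nlinarith [hcancel, mul_nonneg hγ.le (sq_nonneg (x (j+1) - 1/3))]
  intro i h1 hik
  have hu := hup i (by omega)
  have hl := hlo i (by omega)
  simp only [hL, hq] at hu hl
  have hqb : (i:ℝ) * (K - (i:ℝ)) / 2 ≤ K^2 / 8 := by
    nlinarith [sq_nonneg ((i:ℝ) - K/2)]
  have hqnn : (0:ℝ) ≤ (i:ℝ) * (K - (i:ℝ)) / 2 := by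
    have hiK : (i:ℝ) ≤ K := by
      rw [hK]; have : (i:ℝ) ≤ (k:ℝ) := by exact_mod_cast hik
      linarith
    have : (0:ℝ) ≤ (i:ℝ) := by positivity
    nlinarith
  constructor
  · constructor
    · nlinarith
    · linarith
  · rw [abs_le]
    constructor
    · nlinarith
    · nlinarith
end

section
/- Let 0 < γ < 2 - √3 and let z ∈ (0,2). Then (1+γ)² - 3γz > 0, and the real number x := (1 + γ - √((1+γ)² - 3γz))/(3γ) satisfies the equation 2x - z + γ(2x - 3x²) = 0. Moreover x ≤ z/2 if and only if z ≤ 4/3; that is, writing z = a + b for two schools a < b already in the portfolio, the biased student's optimal intermediate school x lies strictly above the midpoint (a+b)/2 (the unbiased student's choice) when a + b > 4/3, and strictly below it when a + b < 4/3. -/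
/-- For 0 < γ < 2 - √3 and z ∈ (0,2), we have (1+γ)² - 3γz > 0, and
`x = (1 + γ - √((1+γ)² - 3γz))/(3γ)` solves `2x - z + γ(2x - 3x²) = 0`; moreover
`x ≤ z/2 ↔ z ≤ 4/3`, with strict overshooting `x > z/2` when `z > 4/3` and strict
undershooting `x < z/2` when `z < 4/3` (here `z = a + b` for the two neighboring
schools, and `z/2` is the unbiased student's choice). -/
theorem stmt_17 (γ : ℝ) (hγ0 : 0 < γ) (hγ : γ < 2 - Real.sqrt 3)
    (z : ℝ) (hz : z ∈ Set.Ioo (0:ℝ) 2) :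
    0 < (1 + γ) ^ 2 - 3 * γ * z ∧
    ∀ x : ℝ, x = (1 + γ - Real.sqrt ((1 + γ) ^ 2 - 3 * γ * z)) / (3 * γ) →
      (2 * x - z + γ * (2 * x - 3 * x ^ 2) = 0 ∧
       (x ≤ z / 2 ↔ z ≤ 4 / 3) ∧
       (z < 4 / 3 → x < z / 2) ∧
       (4 / 3 < z → z / 2 < x)) := by
  obtain ⟨hz0, hz2⟩ := hz
  have h3 : Real.sqrt 3 < 2 - γ := by linarith
  have hs3 : (Real.sqrt 3) ^ 2 = 3 := Real.sq_sqrt (by norm_num)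
  have hs3' : (3:ℝ)/2 < Real.sqrt 3 := by
    nlinarith [Real.sqrt_nonneg 3]
  have hγhalf : γ < 1/2 := by linarith
  have hquad : (2 - γ)^2 > 3 := by
    nlinarith [Real.sqrt_nonneg 3]
  have hD : 0 < (1 + γ) ^ 2 - 3 * γ * z := by nlinarith
  refine ⟨hD, ?_⟩
  intro x hx
  set s := Real.sqrt ((1 + γ) ^ 2 - 3 * γ * z) with hs
  have hs0 : 0 ≤ s := Real.sqrt_nonneg _
  have hs2 : s ^ 2 = (1 + γ) ^ 2 - 3 * γ * z := Real.sq_sqrt hD.le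
  have h3γ : (3:ℝ) * γ ≠ 0 := by positivity
  clear_value s
  have hx3 : 3 * γ * x = 1 + γ - s := by rw [hx]; field_simp
  have h9 : (3 * γ * x) ^ 2 = (1 + γ - s) ^ 2 := by rw [hx3]
  have key : 3 * γ * (2 * x - z + γ * (2 * x - 3 * x ^ 2)) = 0 := by
    linear_combination 2 * (1 + γ) * hx3 - h9 - hs2
  have heq : 2 * x - z + γ * (2 * x - 3 * x ^ 2) = 0 :=
    (mul_eq_zero.mp key).resolve_left h3γ
  have hL : 0 < 1 + γ - 3 * γ * z / 2 := by nlinarith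
  have hγz : 0 < γ * γ * z := by positivity
  have hid : ((1 + γ) ^ 2 - 3 * γ * z) - (1 + γ - 3 * γ * z / 2) ^ 2
      = 3 * (γ * γ * z) * (1 - 3 * z / 4) := by ring
  have hxle : x ≤ z / 2 ↔ 1 + γ - 3 * γ * z / 2 ≤ s := by
    rw [hx, div_le_iff₀ (by positivity : (0:ℝ) < 3 * γ)]
    constructor <;> intro h <;> linarith
  refine ⟨heq, ?_, ?_, ?_⟩
  · rw [hxle]
    constructor
    · intro h
      have h2 : (1 + γ - 3 * γ * z / 2) ^ 2 ≤ s ^ 2 := pow_le_pow_left₀ hL.le h 2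
      rw [hs2] at h2
      by_contra hc
      push_neg at hc
      have hp : 0 < (γ * γ * z) * (3 * z / 4 - 1) :=
        mul_pos hγz (by linarith)
      linarith
    · intro h
      have hfac : 0 ≤ (γ * γ * z) * (1 - 3 * z / 4) :=
        mul_nonneg hγz.le (by linarith)
      have h2 : (1 + γ - 3 * γ * z / 2) ^ 2 ≤ s ^ 2 := by rw [hs2]; linarith
      exact le_of_pow_le_pow_left₀ two_ne_zero hs0 h2
  · intro h
    have hfac : 0 < (γ * γ * z) * (1 - 3 * z / 4) :=
      mul_pos hγz (by linarith)
    have h2 : (1 + γ - 3 * γ * z / 2) ^ 2 < s ^ 2 := by rw [hs2]; linarith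
    have hlt : 1 + γ - 3 * γ * z / 2 < s := lt_of_pow_lt_pow_left₀ 2 hs0 h2
    rw [hx, div_lt_iff₀ (by positivity : (0:ℝ) < 3 * γ)]
    linarith
  · intro h
    have hfac : 0 < (γ * γ * z) * (3 * z / 4 - 1) :=
      mul_pos hγz (by linarith)
    have h2 : s ^ 2 < (1 + γ - 3 * γ * z / 2) ^ 2 := by rw [hs2]; linarith
    have hlt : s < 1 + γ - 3 * γ * z / 2 := lt_of_pow_lt_pow_left₀ 2 hL.le h2
    rw [hx, lt_div_iff₀ (by positivity : (0:ℝ) < 3 * γ)]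
    linarith
end

section
/- Let 0 < γ < 2 - √3 and let θ satisfy 1/(2(1+γ)) < θ < (1 + γ - √((1+γ)² - 6γ))/(6γ). Define z(θ) := (6θ(1+γ) - 3)/(9θ²γ). Then 0 < z(θ) < 2, and for every z ∈ (0,2), the number x := (1 + γ - √((1+γ)² - 3γz))/(3γ) (which is well-defined since (1+γ)² - 3γz > 0 and solves 2x - z + γ(2x - 3x²) = 0) satisfies x ≤ θz if and only if z ≤ z(θ). In particular, if a + b > z(θ) then the biased student's optimal intermediate school x between a and b satisfies x > θ(a+b), and if a + b < z(θ) then x < θ(a+b). -/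
set_option maxHeartbeats 1000000


/-- For 0 < γ < 2 - √3 and θ with
`1/(2(1+γ)) < θ < (1 + γ - √((1+γ)² - 6γ))/(6γ)`, setting
`z(θ) = (6θ(1+γ) - 3)/(9θ²γ)` we have `0 < z(θ) < 2`, and for every `z ∈ (0,2)`,
`(1+γ)² - 3γz > 0` and the root `x = (1 + γ - √((1+γ)² - 3γz))/(3γ)` of
`2x - z + γ(2x - 3x²) = 0` satisfies `x ≤ θz ↔ z ≤ z(θ)`. -/
theorem stmt_18 (γ : ℝ) (hγ0 : 0 < γ) (hγ : γ < 2 - Real.sqrt 3) (θ : ℝ)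
    (hθ1 : 1 / (2 * (1 + γ)) < θ)
    (hθ2 : θ < (1 + γ - Real.sqrt ((1 + γ) ^ 2 - 6 * γ)) / (6 * γ)) :
    0 < (6 * θ * (1 + γ) - 3) / (9 * θ ^ 2 * γ) ∧
    (6 * θ * (1 + γ) - 3) / (9 * θ ^ 2 * γ) < 2 ∧
    ∀ z ∈ Set.Ioo (0:ℝ) 2,
      0 < (1 + γ) ^ 2 - 3 * γ * z ∧
      ∀ x : ℝ, x = (1 + γ - Real.sqrt ((1 + γ) ^ 2 - 3 * γ * z)) / (3 * γ) →
        (2 * x - z + γ * (2 * x - 3 * x ^ 2) = 0 ∧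
         (x ≤ θ * z ↔ z ≤ (6 * θ * (1 + γ) - 3) / (9 * θ ^ 2 * γ))) := by
  have h1γ : (0:ℝ) < 1 + γ := by linarith
  have hs3 : Real.sqrt 3 ^ 2 = 3 := Real.sq_sqrt (by norm_num)
  have hs3' : (0:ℝ) ≤ Real.sqrt 3 := Real.sqrt_nonneg 3
  have hd : (0:ℝ) < (1 + γ) ^ 2 - 6 * γ := by nlinarith [sq_nonneg (2 - γ - Real.sqrt 3)]
  set sd := Real.sqrt ((1 + γ) ^ 2 - 6 * γ) with hsddef
  have hsd : sd ^ 2 = (1 + γ) ^ 2 - 6 * γ := Real.sq_sqrt hd.le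
  have hsd' : 0 ≤ sd := Real.sqrt_nonneg _
  clear_value sd
  have hθpos : 0 < θ := lt_trans (by positivity) hθ1
  have hθ1' : 1 < θ * (2 * (1 + γ)) := by
    rwa [div_lt_iff₀ (by positivity)] at hθ1
  have hθ2' : θ * (6 * γ) < 1 + γ - sd := by
    rwa [lt_div_iff₀ (by positivity)] at hθ2
  -- quadratic positivity: 18γθ² - 6(1+γ)θ + 3 > 0
  have hquad : 18 * γ * θ ^ 2 - 6 * (1 + γ) * θ + 3 > 0 := by
    have hA : 1 + γ - 6 * γ * θ > sd := by linarith
    nlinarith [sq_nonneg (1 + γ - 6 * γ * θ - sd)]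
  have hden : (0:ℝ) < 9 * θ ^ 2 * γ := by positivity
  refine ⟨div_pos (by nlinarith) hden, ?_, ?_⟩
  · rw [div_lt_iff₀ hden]; nlinarith
  · rintro z ⟨hz0, hz2⟩
    have hD : (0:ℝ) < (1 + γ) ^ 2 - 3 * γ * z := by nlinarith
    set sD := Real.sqrt ((1 + γ) ^ 2 - 3 * γ * z) with hsDdef
    have hsD : sD ^ 2 = (1 + γ) ^ 2 - 3 * γ * z := Real.sq_sqrt hD.le
    have hsD' : 0 ≤ sD := Real.sqrt_nonneg _
    clear_value sD
    refine ⟨hD, ?_⟩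
    rintro x rfl
    constructor
    · have h3 : (3*γ) ≠ 0 := by positivity
      field_simp
      linear_combination (-1) * hsD
    · -- x ≤ θz ↔ z ≤ z(θ)
      have hx : (1 + γ - sD) / (3 * γ) ≤ θ * z ↔ 1 + γ - 3 * γ * (θ * z) ≤ sD := by
        rw [div_le_iff₀ (by positivity)]; constructor <;> intro h <;> nlinarith
      have hApos : 0 < 1 + γ - 3 * γ * (θ * z) := by nlinarith
      have hsq : 1 + γ - 3 * γ * (θ * z) ≤ sD ↔
          (1 + γ - 3 * γ * (θ * z)) ^ 2 ≤ (1 + γ) ^ 2 - 3 * γ * z := by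
        rw [hsDdef, Real.le_sqrt hApos.le]
        exact hD.le
      have key : (1 + γ - 3 * γ * (θ * z)) ^ 2 - ((1 + γ) ^ 2 - 3 * γ * z)
          = 3 * γ * z * (3 * γ * θ ^ 2 * z - 2 * θ * (1 + γ) + 1) := by ring
      rw [hx, hsq, le_div_iff₀ hden]
      constructor
      · intro h
        have h2 : 3 * γ * z * (3 * γ * θ ^ 2 * z - 2 * θ * (1 + γ) + 1) ≤ 0 := by
          linarith [key]
        nlinarith [h2, mul_pos hγ0 hz0]
      · intro h
        have hE : 3 * γ * θ ^ 2 * z - 2 * θ * (1 + γ) + 1 ≤ 0 := by nlinarith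
        have h2 : 3 * γ * z * (3 * γ * θ ^ 2 * z - 2 * θ * (1 + γ) + 1) ≤ 0 :=
          mul_nonpos_of_nonneg_of_nonpos (by positivity) hE
        linarith [key]
end

section
/- There exists γ₀ > 0 such that for every γ with 0 < γ < γ₀ the following holds for k = 5: every tuple x_0, x_1, ..., x_6 of reals with x_0 = 1, x_6 = 0, x_i ∈ [0,1] for all i, satisfying the FOC recurrence x_{i+1} = 2x_i - x_{i-1} + γ(2x_i - 3x_i²) for 1 ≤ i ≤ 5, has x_1 > 5/6 and x_5 < 1/6. That is, a γ-biased student with a 5-school portfolio simultaneously overshoots at the top (her highest school exceeds the rational student's highest school 5/6 = k/(k+1)) and undershoots at the bottom (her lowest school is below the rational student's lowest school 1/6 = 1/(k+1)). -/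
set_option maxHeartbeats 1600000

private lemma fb_aux (γ v : ℝ) (hγ : 0 ≤ γ) (h0 : 0 ≤ v) (h1 : v ≤ 1) :
    -γ ≤ γ * (2 * v - 3 * v ^ 2) ∧ γ * (2 * v - 3 * v ^ 2) ≤ γ / 3 := by
  constructor
  · nlinarith [mul_nonneg hγ (mul_nonneg (by linarith : (0:ℝ) ≤ 1 - v)
      (by linarith : (0:ℝ) ≤ 1 + 3 * v))]
  · nlinarith [mul_nonneg hγ (sq_nonneg (v - 1/3))]

private lemma tan_up (v p : ℝ) :
    2 * v - 3 * v ^ 2 ≤ 2 * p - 3 * p ^ 2 + (2 - 6 * p) * (v - p) := by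
  nlinarith [sq_nonneg (v - p)]

private lemma tan_lo (v p ε : ℝ) (h1 : p - ε ≤ v) (h2 : v ≤ p + ε) :
    2 * p - 3 * p ^ 2 + (2 - 6 * p) * (v - p) - 3 * ε ^ 2 ≤ 2 * v - 3 * v ^ 2 := by
  nlinarith [mul_nonneg (by linarith : (0:ℝ) ≤ v - (p - ε))
    (by linarith : (0:ℝ) ≤ p + ε - v)]

/-- There exists γ₀ > 0 such that for every 0 < γ < γ₀ and k = 5:
every sequence `x_0, …, x_6 ∈ [0,1]` with `x_0 = 1`, `x_6 = 0` satisfying the FOC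
recurrence `x_{i+1} = 2x_i - x_{i-1} + γ(2x_i - 3x_i²)` for `1 ≤ i ≤ 5` has
`x_1 > 5/6` (overshooting at the top) and `x_5 < 1/6` (undershooting at the
bottom), relative to the rational equally spaced portfolio `i/6`. -/
theorem stmt_19 :
    ∃ γ₀ : ℝ, 0 < γ₀ ∧ ∀ γ : ℝ, 0 < γ → γ < γ₀ →
      ∀ x : ℕ → ℝ, x 0 = 1 → x 6 = 0 → (∀ i, i ≤ 6 → x i ∈ Set.Icc (0:ℝ) 1) →
        (∀ i, 1 ≤ i → i ≤ 5 →
          x (i + 1) = 2 * x i - x (i - 1) + γ * (2 * x i - 3 * (x i) ^ 2)) →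
        5 / 6 < x 1 ∧ x 5 < 1 / 6 := by
  refine ⟨1/1000, by norm_num, ?_⟩
  intro γ hγ hγ' x hx0 hx6 hbox hrec
  have h1 := hrec 1 le_rfl (by norm_num)
  have h2 := hrec 2 (by norm_num) (by norm_num)
  have h3 := hrec 3 (by norm_num) (by norm_num)
  have h4 := hrec 4 (by norm_num) (by norm_num)
  have h5 := hrec 5 (by norm_num) (by norm_num)
  norm_num at h1 h2 h3 h4 h5
  set a := x 1 with ha
  set b := x 2 with hb
  set c := x 3 with hc
  set d := x 4 with hd
  set e := x 5 with he
  rw [hx0] at h1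
  rw [hx6] at h5
  obtain ⟨ha0, ha1⟩ := hbox 1 (by norm_num)
  obtain ⟨hb0, hb1⟩ := hbox 2 (by norm_num)
  obtain ⟨hc0, hc1⟩ := hbox 3 (by norm_num)
  obtain ⟨hd0, hd1⟩ := hbox 4 (by norm_num)
  obtain ⟨he0, he1⟩ := hbox 5 (by norm_num)
  have t1 := fb_aux γ a hγ.le ha0 ha1
  have t2 := fb_aux γ b hγ.le hb0 hb1
  have t3 := fb_aux γ c hγ.le hc0 hc1
  have t4 := fb_aux γ d hγ.le hd0 hd1
  have t5 := fb_aux γ e hγ.le he0 he1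
  -- interval bounds
  have hA : 5/6 - 5/2*γ ≤ a ∧ a ≤ 5/6 + 5/2*γ := by
    constructor <;>
      linarith [t1.1, t1.2, t2.1, t2.2, t3.1, t3.2, t4.1, t4.2, t5.1, t5.2]
  have hE : 1/6 - 5/2*γ ≤ e ∧ e ≤ 1/6 + 5/2*γ := by
    constructor <;>
      linarith [t1.1, t1.2, t2.1, t2.2, t3.1, t3.2, t4.1, t4.2, t5.1, t5.2]
  have hB : 2/3 - 6*γ ≤ b ∧ b ≤ 2/3 + 6*γ := by
    constructor <;> linarith [t1.1, t1.2, hA.1, hA.2]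
  have hD : 1/3 - 6*γ ≤ d ∧ d ≤ 1/3 + 6*γ := by
    constructor <;> linarith [t5.1, t5.2, hE.1, hE.2]
  have hC : 1/2 - 16*γ ≤ c ∧ c ≤ 1/2 + 16*γ := by
    constructor <;> linarith [t4.1, t4.2, hD.1, hD.2, hE.1, hE.2]
  -- tangent bounds
  have ua := tan_up a (5/6)
  have ub := tan_up b (2/3)
  have uc := tan_up c (1/2)
  have ud := tan_up d (1/3)
  have ue := tan_up e (1/6)
  have la := tan_lo a (5/6) (5/2*γ) hA.1 hA.2
  have lb := tan_lo b (2/3) (6*γ) hB.1 hB.2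
  have lc := tan_lo c (1/2) (16*γ) hC.1 hC.2
  have ld := tan_lo d (1/3) (6*γ) hD.1 hD.2
  have le' := tan_lo e (1/6) (5/2*γ) hE.1 hE.2
  have hγ2 : γ^2 ≤ γ * (1/1000) := by
    rw [sq]; exact mul_le_mul_of_nonneg_left hγ'.le hγ.le
  -- weighted sums
  have hS1 : 5*(2*a - 3*a^2) + 4*(2*b - 3*b^2) + 3*(2*c - 3*c^2)
      + 2*(2*d - 3*d^2) + (2*e - 3*e^2) < 0 := by
    linarith [ua, ub, uc, ud, ue, hA.1, hB.1, hC.1, hE.2, hγ']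
  have hS2 : 0 < (2*a - 3*a^2) + 2*(2*b - 3*b^2) + 3*(2*c - 3*c^2)
      + 4*(2*d - 3*d^2) + 5*(2*e - 3*e^2) := by
    linarith [la, lb, lc, ld, le', hA.2, hB.2, hC.2, hE.1, hγ2]
  have hg1 : γ * (5*(2*a - 3*a^2) + 4*(2*b - 3*b^2) + 3*(2*c - 3*c^2)
      + 2*(2*d - 3*d^2) + (2*e - 3*e^2)) < 0 := mul_neg_of_pos_of_neg hγ hS1
  have hg2 : 0 < γ * ((2*a - 3*a^2) + 2*(2*b - 3*b^2) + 3*(2*c - 3*c^2)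
      + 4*(2*d - 3*d^2) + 5*(2*e - 3*e^2)) := mul_pos hγ hS2
  exact ⟨by linarith [hg1], by linarith [hg2]⟩
end
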